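/- arXiv:2202.01587 — 5 statements merged into one kernel-verified Lean document; each statement's English description precedes it below -/
import Mathlib

section
/- Let S be a nonempty finite set, let w : S → ℝ satisfy w(e) > 0 for every e ∈ S, and for α ∈ ℝ define g(α) := (Σ_{e∈S} w(e)^α · log w(e)) / (Σ_{e∈S} w(e)^α). Then for every α ≥ 0, the arithmetic mean of the logarithms is a lower bound: (1/|S|) · Σ_{e∈S} log w(e) ≤ g(α). -/
theorem weighted_log_avg_lower_bound {ι : Type*} (S : Finset ι) (hS : S.Nonempty)
    (w : ι → ℝ) (hw : ∀ e ∈ S, 0 < w e) :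
    ∀ α : ℝ, 0 ≤ α →
      (1 / (S.card : ℝ)) * ∑ e ∈ S, Real.log (w e) ≤
        (∑ e ∈ S, w e ^ α * Real.log (w e)) / (∑ e ∈ S, w e ^ α) := by
  intro α hα
  have hpos : ∀ e ∈ S, 0 < w e ^ α := fun e he => Real.rpow_pos_of_pos (hw e he) α
  have hsum : 0 < ∑ e ∈ S, w e ^ α := Finset.sum_pos hpos hS
  have hcard : (0 : ℝ) < S.card := by exact_mod_cast hS.card_pos
  have hmon : MonovaryOn (fun e => w e ^ α) (fun e => Real.log (w e)) S := by
    intro i hi j hj hlt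
    have : w i < w j := by
      by_contra h
      exact absurd (Real.log_le_log (hw j hj) (not_lt.mp h)) (not_le.mpr hlt)
    exact Real.rpow_le_rpow (hw i hi).le this.le hα
  have key := hmon.sum_mul_sum_le_card_mul_sum
  rw [one_div_mul_eq_div, div_le_div_iff₀ hcard hsum]
  calc (∑ e ∈ S, Real.log (w e)) * ∑ e ∈ S, w e ^ α
        = (∑ e ∈ S, w e ^ α) * ∑ e ∈ S, Real.log (w e) := by ring
    _ ≤ S.card * ∑ e ∈ S, w e ^ α * Real.log (w e) := key
    _ = (∑ e ∈ S, w e ^ α * Real.log (w e)) * S.card := by ring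
end

section
/- Let S be a nonempty finite set, let w : S → ℝ satisfy w(e) > 0 for every e ∈ S, and for α ∈ ℝ define g(α) := (Σ_{e∈S} w(e)^α · log w(e)) / (Σ_{e∈S} w(e)^α). Then g is monotone nondecreasing on ℝ: for all α₁ ≤ α₂, g(α₁) ≤ g(α₂). -/
open Finset

lemma weighted_chebyshev {ι : Type*} (S : Finset ι) (u v l : ι → ℝ)
    (hu : ∀ e ∈ S, 0 ≤ u e)
    (h : ∀ e ∈ S, ∀ f ∈ S, 0 ≤ (v e - v f) * (l e - l f)) :
    (∑ e ∈ S, u e * l e) * (∑ e ∈ S, u e * v e) ≤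
      (∑ e ∈ S, u e * v e * l e) * (∑ e ∈ S, u e) := by
  have hA : 0 ≤ ∑ e ∈ S, ∑ f ∈ S, u e * u f * ((v e - v f) * (l e - l f)) := by
    refine Finset.sum_nonneg fun e he => Finset.sum_nonneg fun f hf => ?_
    exact mul_nonneg (mul_nonneg (hu e he) (hu f hf)) (h e he f hf)
  set T1 := ∑ e ∈ S, ∑ f ∈ S, u e * v e * l e * u f with hT1
  set T2 := ∑ e ∈ S, ∑ f ∈ S, (u e * l e) * (u f * v f) with hT2
  have h1 : (∑ e ∈ S, u e * v e * l e) * (∑ e ∈ S, u e) = T1 := Finset.sum_mul_sum _ _ _ _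
  have h2 : (∑ e ∈ S, u e * l e) * (∑ e ∈ S, u e * v e) = T2 := Finset.sum_mul_sum _ _ _ _
  have c1 : (∑ e ∈ S, ∑ f ∈ S, (u e * v e) * (u f * l f)) = T2 := by
    rw [Finset.sum_comm, hT2]
    exact Finset.sum_congr rfl fun e _ => Finset.sum_congr rfl fun f _ => mul_comm _ _
  have c2 : (∑ e ∈ S, ∑ f ∈ S, (u f * v f * l f) * u e) = T1 := by
    rw [Finset.sum_comm, hT1]
  have expand : (∑ e ∈ S, ∑ f ∈ S, u e * u f * ((v e - v f) * (l e - l f)))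
      = T1 - T2 - (∑ e ∈ S, ∑ f ∈ S, (u e * v e) * (u f * l f))
        + (∑ e ∈ S, ∑ f ∈ S, (u f * v f * l f) * u e) := by
    rw [hT1, hT2]
    simp only [← Finset.sum_sub_distrib, ← Finset.sum_add_distrib]
    exact Finset.sum_congr rfl fun e _ => Finset.sum_congr rfl fun f _ => by ring
  rw [expand, c1, c2] at hA
  linarith

theorem weighted_log_avg_monotone {ι : Type*} (S : Finset ι) (hS : S.Nonempty)
    (w : ι → ℝ) (hw : ∀ e ∈ S, 0 < w e) :
    ∀ α₁ α₂ : ℝ, α₁ ≤ α₂ →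
      (∑ e ∈ S, w e ^ α₁ * Real.log (w e)) / (∑ e ∈ S, w e ^ α₁) ≤
        (∑ e ∈ S, w e ^ α₂ * Real.log (w e)) / (∑ e ∈ S, w e ^ α₂) := by
  intro α₁ α₂ hα
  set u : ι → ℝ := fun e => w e ^ α₁ with hu
  set v : ι → ℝ := fun e => w e ^ (α₂ - α₁) with hv
  have hpos1 : 0 < ∑ e ∈ S, w e ^ α₁ :=
    Finset.sum_pos (fun e he => Real.rpow_pos_of_pos (hw e he) _) hS
  have hpos2 : 0 < ∑ e ∈ S, w e ^ α₂ :=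
    Finset.sum_pos (fun e he => Real.rpow_pos_of_pos (hw e he) _) hS
  rw [div_le_div_iff₀ hpos1 hpos2]
  have hsplit : ∀ e ∈ S, w e ^ α₂ = u e * v e := by
    intro e he
    rw [hu, hv, ← Real.rpow_add (hw e he)]
    ring_nf
  calc (∑ e ∈ S, w e ^ α₁ * Real.log (w e)) * ∑ e ∈ S, w e ^ α₂
      = (∑ e ∈ S, u e * Real.log (w e)) * ∑ e ∈ S, u e * v e := by
        congr 1
        exact Finset.sum_congr rfl fun e he => by rw [hsplit e he]
    _ ≤ (∑ e ∈ S, u e * v e * Real.log (w e)) * ∑ e ∈ S, u e := by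
        refine weighted_chebyshev S u v (fun e => Real.log (w e))
          (fun e he => (Real.rpow_pos_of_pos (hw e he) _).le) ?_
        intro e he f hf
        rcases le_total (w e) (w f) with hle | hle
        · have hv' : v e ≤ v f :=
            Real.rpow_le_rpow (hw e he).le hle (by linarith)
          have hl' : Real.log (w e) ≤ Real.log (w f) :=
            Real.log_le_log (hw e he) hle
          nlinarith
        · have hv' : v f ≤ v e :=
            Real.rpow_le_rpow (hw f hf).le hle (by linarith)
          have hl' : Real.log (w f) ≤ Real.log (w e) :=
            Real.log_le_log (hw f hf) hle
          exact mul_nonneg (by linarith) (by linarith)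
    _ = (∑ e ∈ S, w e ^ α₂ * Real.log (w e)) * ∑ e ∈ S, w e ^ α₁ := by
        congr 1
        exact Finset.sum_congr rfl fun e he => by rw [hsplit e he]
end

section
/- Let S be a nonempty finite set, let w : S → ℝ satisfy w(e) > 0 for every e ∈ S, and let A ⊆ S be a nonempty subset. Suppose that max_{e∈A} log w(e) < (1/|S|) · Σ_{e∈S} log w(e) (equivalently, log w(e) < (1/|S|) · Σ_{e'∈S} log w(e') for every e ∈ A). Then the function f(α) := (Σ_{e∈A} w(e)^α) / (Σ_{e∈S} w(e)^α) is strictly decreasing on [0, ∞): for all 0 ≤ α₁ < α₂, f(α₂) < f(α₁). -/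
open Finset Real

theorem sampling_mass_strict_anti {ι : Type*} (S : Finset ι) (hS : S.Nonempty)
    (w : ι → ℝ) (hw : ∀ e ∈ S, 0 < w e)
    (A : Finset ι) (hAS : A ⊆ S) (hA : A.Nonempty)
    (hmax : A.sup' hA (fun e => Real.log (w e)) <
      (1 / (S.card : ℝ)) * ∑ e ∈ S, Real.log (w e)) :
    ∀ α₁ α₂ : ℝ, 0 ≤ α₁ → α₁ < α₂ →
      (∑ e ∈ A, w e ^ α₂) / (∑ e ∈ S, w e ^ α₂) <
        (∑ e ∈ A, w e ^ α₁) / (∑ e ∈ S, w e ^ α₁) := by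
  intro α₁ α₂ hα₁ hlt
  have hδ : 0 < α₂ - α₁ := sub_pos.2 hlt
  set δ := α₂ - α₁ with hδdef
  have hT : 0 < ∑ e ∈ S, w e ^ α₁ :=
    Finset.sum_pos (fun e he => Real.rpow_pos_of_pos (hw e he) _) hS
  have hT2 : 0 < ∑ e ∈ S, w e ^ α₂ :=
    Finset.sum_pos (fun e he => Real.rpow_pos_of_pos (hw e he) _) hS
  have hn : (0 : ℝ) < (S.card : ℝ) := by exact_mod_cast Finset.card_pos.2 hS
  set T := ∑ e ∈ S, w e ^ α₁ with hTdef
  -- Chebyshev's sum inequality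
  have hmono : MonovaryOn (fun e => w e ^ α₁) (fun e => Real.log (w e)) (S : Set ι) := by
    intro i hi j hj hij
    have hwi := hw i hi
    have hwj := hw j hj
    have : w i < w j := by
      by_contra h
      exact absurd (Real.log_le_log hwj (not_lt.1 h)) (not_le.2 hij)
    exact Real.rpow_le_rpow hwi.le this.le hα₁
  have hcheb : T * ∑ e ∈ S, Real.log (w e) ≤
      (S.card : ℝ) * ∑ e ∈ S, w e ^ α₁ * Real.log (w e) := by
    simpa using hmono.sum_mul_sum_le_card_mul_sum
  have hmean : (1 / (S.card : ℝ)) * ∑ e ∈ S, Real.log (w e) ≤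
      (∑ e ∈ S, w e ^ α₁ * Real.log (w e)) / T := by
    rw [one_div, inv_mul_le_iff₀ hn, ← sub_nonneg]
    have h := sub_nonneg.2 hcheb
    have : 0 ≤ ((S.card : ℝ) * ∑ e ∈ S, w e ^ α₁ * Real.log (w e)
        - T * ∑ e ∈ S, Real.log (w e)) / T := div_nonneg h hT.le
    calc (0:ℝ) ≤ ((S.card : ℝ) * ∑ e ∈ S, w e ^ α₁ * Real.log (w e)
        - T * ∑ e ∈ S, Real.log (w e)) / T := this
      _ = (S.card : ℝ) * ((∑ e ∈ S, w e ^ α₁ * Real.log (w e)) / T)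
          - ∑ e ∈ S, Real.log (w e) := by field_simp
  -- key inequality for each a ∈ A
  have hkey : ∀ a ∈ A, w a ^ δ * T < ∑ e ∈ S, w e ^ α₂ := by
    intro a ha
    have hwa := hw a (hAS ha)
    have hla : Real.log (w a) < (1 / (S.card : ℝ)) * ∑ e ∈ S, Real.log (w e) :=
      lt_of_le_of_lt (Finset.le_sup' (fun e => Real.log (w e)) ha) hmax
    have h1 : w a ^ δ = Real.exp (δ * Real.log (w a)) := by
      rw [Real.rpow_def_of_pos hwa, mul_comm]
    have h2 : Real.exp (δ * Real.log (w a)) <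
        Real.exp (δ * ((∑ e ∈ S, w e ^ α₁ * Real.log (w e)) / T)) :=
      Real.exp_lt_exp.2 (mul_lt_mul_of_pos_left (lt_of_lt_of_le hla hmean) hδ)
    have h3 : Real.exp (δ * ((∑ e ∈ S, w e ^ α₁ * Real.log (w e)) / T)) =
        ∏ e ∈ S, (w e ^ δ) ^ (w e ^ α₁ / T) := by
      have hsum : δ * ((∑ e ∈ S, w e ^ α₁ * Real.log (w e)) / T) =
          ∑ e ∈ S, δ * Real.log (w e) * (w e ^ α₁ / T) := by
        rw [Finset.sum_div, Finset.mul_sum]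
        exact Finset.sum_congr rfl fun e _ => by ring
      rw [hsum, Real.exp_sum]
      refine Finset.prod_congr rfl fun e he => ?_
      rw [Real.rpow_def_of_pos (Real.rpow_pos_of_pos (hw e he) δ) (w e ^ α₁ / T),
        Real.log_rpow (hw e he)]
    have h4 : ∏ e ∈ S, (w e ^ δ) ^ (w e ^ α₁ / T) ≤
        ∑ e ∈ S, (w e ^ α₁ / T) * (w e ^ δ) := by
      refine Real.geom_mean_le_arith_mean_weighted S _ _
        (fun e he => div_nonneg (Real.rpow_pos_of_pos (hw e he) _).le hT.le) ?_
        (fun e he => (Real.rpow_pos_of_pos (hw e he) _).le)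
      rw [← Finset.sum_div, div_self hT.ne']
    have h5 : ∑ e ∈ S, (w e ^ α₁ / T) * (w e ^ δ) = (∑ e ∈ S, w e ^ α₂) / T := by
      rw [Finset.sum_div]
      refine Finset.sum_congr rfl fun e he => ?_
      rw [div_mul_eq_mul_div, ← Real.rpow_add (hw e he), hδdef]
      norm_num
    have : w a ^ δ < (∑ e ∈ S, w e ^ α₂) / T := by
      rw [h1]
      calc Real.exp (δ * Real.log (w a))
          < Real.exp (δ * ((∑ e ∈ S, w e ^ α₁ * Real.log (w e)) / T)) := h2
        _ = ∏ e ∈ S, (w e ^ δ) ^ (w e ^ α₁ / T) := h3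
        _ ≤ ∑ e ∈ S, (w e ^ α₁ / T) * (w e ^ δ) := h4
        _ = (∑ e ∈ S, w e ^ α₂) / T := h5
    exact (lt_div_iff₀ hT).1 this
  rw [div_lt_div_iff₀ hT2 hT, Finset.sum_mul, Finset.sum_mul]
  refine Finset.sum_lt_sum_of_nonempty hA fun a ha => ?_
  have hwa := hw a (hAS ha)
  have hsplit : w a ^ α₂ = w a ^ α₁ * w a ^ δ := by
    rw [← Real.rpow_add hwa, hδdef]; norm_num
  rw [hsplit, mul_assoc]
  exact mul_lt_mul_of_pos_left (hkey a ha) (Real.rpow_pos_of_pos hwa _)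
end

section
/- Let V be a finite type, let E be a finite set of hyperedges (nonempty finite subsets of V), and for v ∈ V let d(v) := |{e ∈ E : v ∈ e}| be the degree of v. Let ω : E → ℝ satisfy ω(e) > 0 for all e ∈ E. For k ∈ ℕ, let V_k := {v ∈ V : d(v) ≤ k} and E(V_k) := {e ∈ E : e ∩ V_k ≠ ∅}, and for α ∈ ℝ define h_α(k) := 1 − (Σ_{e ∈ E(V_k)} ω(e)^α) / (Σ_{e ∈ E} ω(e)^α). Fix k ∈ ℕ such that E(V_k) is nonempty and max_{e ∈ E(V_k)} log ω(e) < (1/|E|) · Σ_{e ∈ E} log ω(e). Then α ↦ h_α(k) is strictly increasing on [0, ∞): for all 0 ≤ α₁ < α₂, h_{α₁}(k) < h_{α₂}(k). -/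
theorem h_strictly_increasing_in_alpha {V : Type*} [Fintype V] [DecidableEq V]
    (E : Finset (Finset V)) (hedges : ∀ e ∈ E, e.Nonempty)
    (d : V → ℕ) (hd : ∀ v : V, d v = (E.filter (fun e => v ∈ e)).card)
    (ω : Finset V → ℝ) (hω : ∀ e ∈ E, 0 < ω e)
    (k : ℕ)
    (hEVk : (E.filter (fun e => (e ∩ Finset.univ.filter (fun v => d v ≤ k)).Nonempty)).Nonempty)
    (hmax : (E.filter (fun e => (e ∩ Finset.univ.filter (fun v => d v ≤ k)).Nonempty)).sup' hEVk
        (fun e => Real.log (ω e)) <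
      (1 / (E.card : ℝ)) * ∑ e ∈ E, Real.log (ω e)) :
    ∀ α₁ α₂ : ℝ, 0 ≤ α₁ → α₁ < α₂ →
      (1 - (∑ e ∈ E.filter (fun e => (e ∩ Finset.univ.filter (fun v => d v ≤ k)).Nonempty),
              ω e ^ α₁) / (∑ e ∈ E, ω e ^ α₁)) <
        (1 - (∑ e ∈ E.filter (fun e => (e ∩ Finset.univ.filter (fun v => d v ≤ k)).Nonempty),
              ω e ^ α₂) / (∑ e ∈ E, ω e ^ α₂)) := by
  intro α₁ α₂ hα₁ hlt
  set A := E.filter (fun e => (e ∩ Finset.univ.filter (fun v => d v ≤ k)).Nonempty) with hAdef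
  have hAE : A ⊆ E := Finset.filter_subset _ _
  obtain ⟨a₀, ha₀⟩ := hEVk
  have hE : E.Nonempty := ⟨a₀, hAE ha₀⟩
  have hn : 0 < (E.card : ℝ) := by exact_mod_cast Finset.card_pos.mpr hE
  set M := A.sup' hEVk (fun e => Real.log (ω e)) with hM
  set W := Real.exp M with hWdef
  have hW : 0 < W := Real.exp_pos _
  set δ := α₂ - α₁ with hδdef
  have hδ : 0 < δ := sub_pos.mpr hlt
  have hα₁₂ : α₁ + δ = α₂ := by rw [hδdef]; ring
  -- sum of logs exceeds card * M
  have hlogsum : (E.card : ℝ) * M < ∑ e ∈ E, Real.log (ω e) := by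
    have := (mul_lt_mul_iff_right₀ hn).mpr hmax
    rwa [← mul_assoc, mul_one_div, div_self hn.ne', one_mul] at this
  -- step ii : ∑ ω^δ > card * W^δ
  have hWδ : W ^ δ = Real.exp (δ * M) := by
    rw [hWdef, ← Real.exp_mul, mul_comm]
  have hsum_pow : (E.card : ℝ) * W ^ δ < ∑ e ∈ E, ω e ^ δ := by
    have hterm : ∀ e ∈ E, W ^ δ * (1 + δ * (Real.log (ω e) - M)) ≤ ω e ^ δ := by
      intro e he
      have hpe := hω e he
      have h1 : ω e ^ δ = Real.exp (δ * M) * Real.exp (δ * (Real.log (ω e) - M)) := by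
        rw [← Real.exp_add, Real.rpow_def_of_pos hpe]
        ring_nf
      rw [h1, hWδ]
      have := Real.add_one_le_exp (δ * (Real.log (ω e) - M))
      have hEp : (0:ℝ) < Real.exp (δ * M) := Real.exp_pos _
      nlinarith
    have hsum := Finset.sum_le_sum hterm
    have hexp : ∑ e ∈ E, W ^ δ * (1 + δ * (Real.log (ω e) - M))
        = (E.card : ℝ) * W ^ δ + W ^ δ * δ * ((∑ e ∈ E, Real.log (ω e)) - E.card * M) := by
      rw [Finset.mul_sum] at *
      rw [Finset.sum_congr rfl (fun e _ => by ring :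
        ∀ e ∈ E, W ^ δ * (1 + δ * (Real.log (ω e) - M))
          = W ^ δ + W ^ δ * δ * Real.log (ω e) - W ^ δ * δ * M)]
      rw [Finset.sum_sub_distrib, Finset.sum_add_distrib, ← Finset.mul_sum]
      simp [Finset.sum_const, mul_comm]
      ring
    have hpos : 0 < W ^ δ * δ * ((∑ e ∈ E, Real.log (ω e)) - E.card * M) := by
      have h0 : 0 < W ^ δ := Real.rpow_pos_of_pos hW _
      exact mul_pos (mul_pos h0 hδ) (by linarith)
    calc (E.card : ℝ) * W ^ δ
        < (E.card : ℝ) * W ^ δ + W ^ δ * δ * ((∑ e ∈ E, Real.log (ω e)) - E.card * M) := by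
          linarith
      _ = ∑ e ∈ E, W ^ δ * (1 + δ * (Real.log (ω e) - M)) := hexp.symm
      _ ≤ ∑ e ∈ E, ω e ^ δ := hsum
  -- step i : pointwise bound
  have hptwise : ∀ e ∈ E, W ^ α₁ * (ω e ^ δ - W ^ δ) ≤ ω e ^ α₁ * (ω e ^ δ - W ^ δ) := by
    intro e he
    have hpe := hω e he
    rcases le_or_gt W (ω e) with h | h
    · have h1 : W ^ α₁ ≤ ω e ^ α₁ := Real.rpow_le_rpow hW.le h hα₁
      have h2 : W ^ δ ≤ ω e ^ δ := Real.rpow_le_rpow hW.le h hδ.le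
      exact mul_le_mul_of_nonneg_right h1 (by linarith)
    · have h1 : ω e ^ α₁ ≤ W ^ α₁ := Real.rpow_le_rpow hpe.le h.le hα₁
      have h2 : ω e ^ δ ≤ W ^ δ := Real.rpow_le_rpow hpe.le h.le hδ.le
      exact mul_le_mul_of_nonpos_right h1 (by linarith)
  -- step iii : for each a ∈ A the inner sum is positive
  have hinner : ∀ a ∈ A, 0 < ∑ e ∈ E, ω e ^ α₁ * (ω e ^ δ - ω a ^ δ) := by
    intro a ha
    have hpa := hω a (hAE ha)
    have hlogW : ω a ≤ W := by
      have h1 : Real.log (ω a) ≤ M := Finset.le_sup' (fun e => Real.log (ω e)) ha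
      calc ω a = Real.exp (Real.log (ω a)) := (Real.exp_log hpa).symm
        _ ≤ W := Real.exp_le_exp.mpr h1
    have hWa : ω a ^ δ ≤ W ^ δ := Real.rpow_le_rpow hpa.le hlogW hδ.le
    have h1 : ∀ e ∈ E, ω e ^ α₁ * (ω e ^ δ - W ^ δ) ≤ ω e ^ α₁ * (ω e ^ δ - ω a ^ δ) := by
      intro e he
      have : (0:ℝ) ≤ ω e ^ α₁ := (Real.rpow_pos_of_pos (hω e he) _).le
      nlinarith
    have h2 : ∑ e ∈ E, W ^ α₁ * (ω e ^ δ - W ^ δ) ≤ ∑ e ∈ E, ω e ^ α₁ * (ω e ^ δ - ω a ^ δ) :=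
      le_trans (Finset.sum_le_sum hptwise) (Finset.sum_le_sum h1)
    have h3 : ∑ e ∈ E, W ^ α₁ * (ω e ^ δ - W ^ δ)
        = W ^ α₁ * ((∑ e ∈ E, ω e ^ δ) - E.card * W ^ δ) := by
      rw [← Finset.mul_sum, Finset.sum_sub_distrib, Finset.sum_const]
      push_cast
      ring
    have h4 : 0 < W ^ α₁ * ((∑ e ∈ E, ω e ^ δ) - E.card * W ^ δ) := by
      have : 0 < W ^ α₁ := Real.rpow_pos_of_pos hW _
      nlinarith
    linarith [h3 ▸ h4, h2]
  -- step iv : total positivity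
  have htotal : 0 < ∑ a ∈ A, ω a ^ α₁ * (∑ e ∈ E, ω e ^ α₁ * (ω e ^ δ - ω a ^ δ)) := by
    refine Finset.sum_pos (fun a ha => ?_) ⟨a₀, ha₀⟩
    exact mul_pos (Real.rpow_pos_of_pos (hω a (hAE ha)) _) (hinner a ha)
  -- step v : rearrangement
  have hkey : ∑ a ∈ A, ω a ^ α₁ * (∑ e ∈ E, ω e ^ α₁ * (ω e ^ δ - ω a ^ δ))
      = (∑ a ∈ A, ω a ^ α₁) * (∑ e ∈ E, ω e ^ α₂)
        - (∑ a ∈ A, ω a ^ α₂) * (∑ e ∈ E, ω e ^ α₁) := by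
    rw [Finset.sum_mul_sum, Finset.sum_mul_sum, ← Finset.sum_sub_distrib]
    refine Finset.sum_congr rfl fun a ha => ?_
    rw [Finset.mul_sum, ← Finset.sum_sub_distrib]
    refine Finset.sum_congr rfl fun e he => ?_
    have hpa := hω a (hAE ha)
    have hpe := hω e he
    have h1 : ω a ^ α₂ = ω a ^ α₁ * ω a ^ δ := by rw [← Real.rpow_add hpa, hα₁₂]
    have h2 : ω e ^ α₂ = ω e ^ α₁ * ω e ^ δ := by rw [← Real.rpow_add hpe, hα₁₂]
    rw [h1, h2]; ring
  -- conclude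
  have hS1 : 0 < ∑ e ∈ E, ω e ^ α₁ :=
    Finset.sum_pos (fun e he => Real.rpow_pos_of_pos (hω e he) _) hE
  have hS2 : 0 < ∑ e ∈ E, ω e ^ α₂ :=
    Finset.sum_pos (fun e he => Real.rpow_pos_of_pos (hω e he) _) hE
  have hfinal : (∑ a ∈ A, ω a ^ α₂) * (∑ e ∈ E, ω e ^ α₁)
      < (∑ a ∈ A, ω a ^ α₁) * (∑ e ∈ E, ω e ^ α₂) := by
    rw [hkey] at htotal; linarith
  have := (div_lt_div_iff₀ hS2 hS1).mpr hfinal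
  linarith
end

section
/- Let V be a finite type, let E be a nonempty finite set of hyperedges (nonempty finite subsets of V), and for v ∈ V let d(v) := |{e ∈ E : v ∈ e}| be the degree of v. Define the MiDaS weight ω(e) := min_{v ∈ e} d(v) (as a real number) for each e ∈ E; note ω(e) ≥ 1 since every node of a hyperedge has degree at least 1. For k ∈ ℕ, let V_k := {v ∈ V : d(v) ≤ k}, E(V_k) := {e ∈ E : e ∩ V_k ≠ ∅}, and for α ∈ ℝ define h_α(k) := 1 − (Σ_{e ∈ E(V_k)} ω(e)^α) / (Σ_{e ∈ E} ω(e)^α). If k ∈ ℕ is such that E(V_k) is nonempty and max_{e ∈ E(V_k)} log ω(e) < (1/|E|) · Σ_{e ∈ E} log ω(e), then for all 0 ≤ α₁ < α₂ one has h_{α₁}(k) < h_{α₂}(k); that is, as α increases, MiDaS-Basic becomes more biased towards hyperedges whose nodes all have degree greater than k. -/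
theorem midas_basic_h_strictly_increasing {V : Type*} [Fintype V] [DecidableEq V]
    (E : Finset (Finset V)) (hE : E.Nonempty) (hedges : ∀ e ∈ E, e.Nonempty)
    (d : V → ℕ) (hd : ∀ v : V, d v = (E.filter (fun e => v ∈ e)).card)
    (ω : Finset V → ℝ)
    (hω : ∀ e ∈ E, ∀ he : e.Nonempty, ω e = ((e.inf' he d : ℕ) : ℝ))
    (k : ℕ)
    (hEVk : (E.filter (fun e => (e ∩ Finset.univ.filter (fun v => d v ≤ k)).Nonempty)).Nonempty)
    (hmax : (E.filter (fun e => (e ∩ Finset.univ.filter (fun v => d v ≤ k)).Nonempty)).sup' hEVk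
        (fun e => Real.log (ω e)) <
      (1 / (E.card : ℝ)) * ∑ e ∈ E, Real.log (ω e)) :
    ∀ α₁ α₂ : ℝ, 0 ≤ α₁ → α₁ < α₂ →
      (1 - (∑ e ∈ E.filter (fun e => (e ∩ Finset.univ.filter (fun v => d v ≤ k)).Nonempty),
              ω e ^ α₁) / (∑ e ∈ E, ω e ^ α₁)) <
        (1 - (∑ e ∈ E.filter (fun e => (e ∩ Finset.univ.filter (fun v => d v ≤ k)).Nonempty),
              ω e ^ α₂) / (∑ e ∈ E, ω e ^ α₂)) := by
  intro α₁ α₂ hα₁ hlt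
  set S := E.filter (fun e => (e ∩ Finset.univ.filter (fun v => d v ≤ k)).Nonempty) with hSdef
  have hSE : S ⊆ E := Finset.filter_subset _ _
  have hωpos : ∀ e ∈ E, 0 < ω e := by
    intro e he
    have hne := hedges e he
    rw [hω e he hne]
    have h1 : 1 ≤ e.inf' hne d := Finset.le_inf' hne d (fun v hv => by
      rw [hd v]
      exact Finset.card_pos.mpr ⟨e, Finset.mem_filter.mpr ⟨he, hv⟩⟩)
    exact_mod_cast Nat.lt_of_lt_of_le Nat.zero_lt_one h1
  set δ := α₂ - α₁ with hδdef
  have hδ : 0 < δ := sub_pos.mpr hlt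
  set c := (1 / (E.card : ℝ)) * ∑ e ∈ E, Real.log (ω e) with hcdef
  have hn : (0 : ℝ) < (E.card : ℝ) := by exact_mod_cast Finset.card_pos.mpr hE
  have hsumlog : ∑ e ∈ E, Real.log (ω e) = (E.card : ℝ) * c := by
    rw [hcdef]; field_simp
  have hlogc : ∀ e ∈ S, Real.log (ω e) < c := fun e heS =>
    lt_of_le_of_lt (Finset.le_sup' (fun e => Real.log (ω e)) heS) hmax
  have hrpow : ∀ e ∈ E, ω e ^ δ = Real.exp (δ * Real.log (ω e)) := fun e he => by
    rw [Real.rpow_def_of_pos (hωpos e he), mul_comm]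
  have hsplit : ∀ e ∈ E, ω e ^ α₂ = ω e ^ α₁ * ω e ^ δ := by
    intro e he
    have h : α₁ + δ = α₂ := by rw [hδdef]; ring
    rw [← h, Real.rpow_add (hωpos e he)]
  -- strict bound on S
  have hA : ∑ e ∈ S, ω e ^ α₂ < Real.exp (δ * c) * ∑ e ∈ S, ω e ^ α₁ := by
    rw [Finset.mul_sum]
    refine Finset.sum_lt_sum_of_nonempty hEVk ?_
    intro e heS
    have he := hSE heS
    rw [hsplit e he, hrpow e he]
    have h1 : Real.exp (δ * Real.log (ω e)) < Real.exp (δ * c) :=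
      Real.exp_lt_exp.mpr (mul_lt_mul_of_pos_left (hlogc e heS) hδ)
    have h2 : (0 : ℝ) < ω e ^ α₁ := Real.rpow_pos_of_pos (hωpos e he) _
    calc ω e ^ α₁ * Real.exp (δ * Real.log (ω e))
        < ω e ^ α₁ * Real.exp (δ * c) := by
          exact mul_lt_mul_of_pos_left h1 h2
      _ = Real.exp (δ * c) * ω e ^ α₁ := by ring
  -- Chebyshev
  have hmono : MonovaryOn (fun e => ω e ^ α₁) (fun e => ω e ^ δ) (E : Finset (Finset V)) := by
    intro i hi j hj hgij
    have hij : ω i ≤ ω j := by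
      by_contra hcon
      push_neg at hcon
      exact absurd (Real.rpow_lt_rpow (hωpos j hj).le hcon hδ) (not_lt.mpr hgij.le)
    exact Real.rpow_le_rpow (hωpos i hi).le hij hα₁
  have hcheb := hmono.sum_mul_sum_le_card_mul_sum
  -- Jensen: ∑ ω^δ ≥ card * exp (δ c)
  have hjensen : (E.card : ℝ) * Real.exp (δ * c) ≤ ∑ e ∈ E, ω e ^ δ := by
    have h1 : ∀ e ∈ E, Real.exp (δ * c) * (1 + (δ * Real.log (ω e) - δ * c)) ≤ ω e ^ δ := by
      intro e he
      rw [hrpow e he]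
      have h2 := Real.add_one_le_exp (δ * Real.log (ω e) - δ * c)
      calc Real.exp (δ * c) * (1 + (δ * Real.log (ω e) - δ * c))
          ≤ Real.exp (δ * c) * Real.exp (δ * Real.log (ω e) - δ * c) := by
            refine mul_le_mul_of_nonneg_left ?_ (Real.exp_pos _).le
            linarith
        _ = Real.exp (δ * Real.log (ω e)) := by rw [← Real.exp_add]; ring_nf
    have key : ∑ e ∈ E, Real.exp (δ * c) * (1 + (δ * Real.log (ω e) - δ * c))
        = (E.card : ℝ) * Real.exp (δ * c) := by
      rw [← Finset.mul_sum, Finset.sum_add_distrib, Finset.sum_sub_distrib,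
        Finset.sum_const, ← Finset.mul_sum, hsumlog, Finset.sum_const,
        nsmul_eq_mul, nsmul_eq_mul]
      ring
    calc (E.card : ℝ) * Real.exp (δ * c)
        = ∑ e ∈ E, Real.exp (δ * c) * (1 + (δ * Real.log (ω e) - δ * c)) := key.symm
      _ ≤ ∑ e ∈ E, ω e ^ δ := Finset.sum_le_sum h1
  have hB1pos : (0 : ℝ) < ∑ e ∈ E, ω e ^ α₁ :=
    Finset.sum_pos (fun e he => Real.rpow_pos_of_pos (hωpos e he) _) hE
  have hB2pos : (0 : ℝ) < ∑ e ∈ E, ω e ^ α₂ :=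
    Finset.sum_pos (fun e he => Real.rpow_pos_of_pos (hωpos e he) _) hE
  have hA1pos : (0 : ℝ) < ∑ e ∈ S, ω e ^ α₁ :=
    Finset.sum_pos (fun e he => Real.rpow_pos_of_pos (hωpos e (hSE he)) _) hEVk
  -- B₂ ≥ exp(δc) * B₁
  have hB : Real.exp (δ * c) * ∑ e ∈ E, ω e ^ α₁ ≤ ∑ e ∈ E, ω e ^ α₂ := by
    have h2 : ∑ e ∈ E, ω e ^ α₂ = ∑ e ∈ E, ω e ^ α₁ * ω e ^ δ :=
      Finset.sum_congr rfl hsplit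
    have h4 : (∑ e ∈ E, ω e ^ α₁) * ((E.card : ℝ) * Real.exp (δ * c))
        ≤ (∑ e ∈ E, ω e ^ α₁) * ∑ e ∈ E, ω e ^ δ :=
      mul_le_mul_of_nonneg_left hjensen hB1pos.le
    have h5 : (E.card : ℝ) * (Real.exp (δ * c) * ∑ e ∈ E, ω e ^ α₁)
        ≤ (E.card : ℝ) * ∑ e ∈ E, ω e ^ α₂ := by
      calc (E.card : ℝ) * (Real.exp (δ * c) * ∑ e ∈ E, ω e ^ α₁)
          = (∑ e ∈ E, ω e ^ α₁) * ((E.card : ℝ) * Real.exp (δ * c)) := by ring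
        _ ≤ (∑ e ∈ E, ω e ^ α₁) * ∑ e ∈ E, ω e ^ δ := h4
        _ ≤ (E.card : ℝ) * ∑ e ∈ E, ω e ^ α₁ * ω e ^ δ := hcheb
        _ = (E.card : ℝ) * ∑ e ∈ E, ω e ^ α₂ := by rw [← h2]
    exact le_of_mul_le_mul_left h5 hn
  have hfinal : (∑ e ∈ S, ω e ^ α₂) * ∑ e ∈ E, ω e ^ α₁
      < (∑ e ∈ S, ω e ^ α₁) * ∑ e ∈ E, ω e ^ α₂ := by
    calc (∑ e ∈ S, ω e ^ α₂) * ∑ e ∈ E, ω e ^ α₁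
        < (Real.exp (δ * c) * ∑ e ∈ S, ω e ^ α₁) * ∑ e ∈ E, ω e ^ α₁ :=
          mul_lt_mul_of_pos_right hA hB1pos
      _ = (∑ e ∈ S, ω e ^ α₁) * (Real.exp (δ * c) * ∑ e ∈ E, ω e ^ α₁) := by ring
      _ ≤ (∑ e ∈ S, ω e ^ α₁) * ∑ e ∈ E, ω e ^ α₂ :=
          mul_le_mul_of_nonneg_left hB hA1pos.le
  exact sub_lt_sub_left ((div_lt_div_iff₀ hB2pos hB1pos).mpr hfinal) 1
end
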